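/- (The lowering and raising maps commute with the infinitesimal action of passive linear optics.) Fix m ∈ ℕ. For any m×m complex matrix h, define the second-quantized operator D_h := Σ_{i,j=1}^m h_{ij} · (a_i† ∘ a_j) ∈ End(V), and for T ∈ End(V) write ad_h(T) := D_h∘T − T∘D_h. Then for every ℂ-linear endomorphism T of V = ℂ[x_1,…,x_m], one has L(ad_h(T)) = ad_h(L(T)) and R(ad_h(T)) = ad_h(R(T)); that is, L and R intertwine the adjoint action of the Lie algebra gl(m) realized by the quadratic Hamiltonians a_i† a_j. -/
import Mathlib


open MvPolynomial

noncomputable section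

/-- The Bargmann/polynomial realization of the `m`-mode bosonic Fock space. -/
abbrev V (m : ℕ) := MvPolynomial (Fin m) ℂ

/-- The creation operator `a_s†`: multiplication by `x_s`. -/
def aDag (m : ℕ) (s : Fin m) : Module.End ℂ (V m) := LinearMap.mulLeft ℂ (X s)

/-- The annihilation operator `a_s`: the partial derivative `∂/∂x_s`. -/
def aAnn (m : ℕ) (s : Fin m) : Module.End ℂ (V m) := (pderiv s).toLinearMap

/-- The lowering map `L(T) = Σ_s a_s ∘ T ∘ a_s†`. -/
def Lop (m : ℕ) (T : Module.End ℂ (V m)) : Module.End ℂ (V m) :=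
  ∑ s, aAnn m s ∘ₗ T ∘ₗ aDag m s

/-- The raising map `R(T) = Σ_s a_s† ∘ T ∘ a_s`. -/
def Rop (m : ℕ) (T : Module.End ℂ (V m)) : Module.End ℂ (V m) :=
  ∑ s, aDag m s ∘ₗ T ∘ₗ aAnn m s

/-- The number operator `N = Σ_s a_s† ∘ a_s`. -/
def numOp (m : ℕ) : Module.End ℂ (V m) := ∑ s, aDag m s ∘ₗ aAnn m s

end

/-- The second-quantized operator `D_h = Σ_{i,j} h_{ij} a_i† ∘ a_j` associated with an
`m × m` complex matrix `h`. -/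
noncomputable def Dop (m : ℕ) (h : Matrix (Fin m) (Fin m) ℂ) : Module.End ℂ (V m) :=
  ∑ i, ∑ j, h i j • (aDag m i ∘ₗ aAnn m j)

/-- The adjoint action `ad_h(T) = D_h ∘ T − T ∘ D_h` of the quadratic Hamiltonian `D_h`. -/
noncomputable def adOp (m : ℕ) (h : Matrix (Fin m) (Fin m) ℂ)
    (T : Module.End ℂ (V m)) : Module.End ℂ (V m) :=
  Dop m h ∘ₗ T - T ∘ₗ Dop m h

lemma ann_ann_comm (m : ℕ) (s t : Fin m) : aAnn m s * aAnn m t = aAnn m t * aAnn m s := by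
  apply LinearMap.ext; intro p
  show pderiv s (pderiv t p) = pderiv t (pderiv s p)
  induction p using MvPolynomial.induction_on with
  | C a => simp
  | add p q hp hq => simp [hp, hq]
  | mul_X p i hp =>
      simp only [pderiv_mul, pderiv_X, Pi.single_apply, map_add]
      split_ifs <;> (simp [hp]; try ring)

lemma dag_dag_comm (m : ℕ) (s t : Fin m) : aDag m s * aDag m t = aDag m t * aDag m s := by
  apply LinearMap.ext; intro p
  show X s * (X t * p) = X t * (X s * p)
  ring

lemma ccr (m : ℕ) (s t : Fin m) :
    aAnn m s * aDag m t = aDag m t * aAnn m s + if s = t then 1 else 0 := by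
  rcases eq_or_ne s t with rfl | hst
  · rw [if_pos rfl]
    apply LinearMap.ext; intro p
    simp only [LinearMap.add_apply, Module.End.mul_apply, Module.End.one_apply, aAnn, aDag,
      LinearMap.mulLeft_apply, Derivation.coeFn_coe]
    rw [pderiv_mul, pderiv_X_self]
    ring
  · rw [if_neg hst, add_zero]
    apply LinearMap.ext; intro p
    simp only [Module.End.mul_apply, aAnn, aDag, LinearMap.mulLeft_apply, Derivation.coeFn_coe]
    rw [pderiv_mul, pderiv_X_of_ne (Ne.symm hst)]
    ring

lemma ann_D (m : ℕ) (h : Matrix (Fin m) (Fin m) ℂ) (s : Fin m) :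
    aAnn m s * Dop m h = Dop m h * aAnn m s + ∑ j, h s j • aAnn m j := by
  have key : ∀ i j : Fin m, aAnn m s * (aDag m i * aAnn m j)
      = aDag m i * aAnn m j * aAnn m s + (if s = i then aAnn m j else 0) := by
    intro i j
    rw [← mul_assoc, ccr, add_mul, mul_assoc, ann_ann_comm m s j, ← mul_assoc]
    congr 1
    split_ifs <;> simp
  simp only [Dop, ← Module.End.mul_eq_comp, Finset.mul_sum, Finset.sum_mul,
    mul_smul_comm, smul_mul_assoc, key, smul_add, Finset.sum_add_distrib,
    smul_ite, smul_zero, Finset.sum_ite_irrel, Finset.sum_const_zero, Finset.sum_ite_eq,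
    Finset.mem_univ, if_true]

lemma D_dag (m : ℕ) (h : Matrix (Fin m) (Fin m) ℂ) (s : Fin m) :
    Dop m h * aDag m s = aDag m s * Dop m h + ∑ i, h i s • aDag m i := by
  have key : ∀ i j : Fin m, (aDag m i * aAnn m j) * aDag m s
      = aDag m s * (aDag m i * aAnn m j) + (if j = s then aDag m i else 0) := by
    intro i j
    rw [mul_assoc, ccr, mul_add, ← mul_assoc, dag_dag_comm m i s, mul_assoc]
    congr 1
    split_ifs <;> simp
  simp only [Dop, ← Module.End.mul_eq_comp, Finset.mul_sum, Finset.sum_mul,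
    mul_smul_comm, smul_mul_assoc, key, smul_add, Finset.sum_add_distrib,
    smul_ite, smul_zero, Finset.sum_ite_irrel, Finset.sum_const_zero, Finset.sum_ite_eq',
    Finset.mem_univ, if_true]

/-- The lowering and raising maps commute with the infinitesimal
action of passive linear optics: `L(ad_h(T)) = ad_h(L(T))` and `R(ad_h(T)) = ad_h(R(T))`
for every `m × m` complex matrix `h` and every `T ∈ End(V)`. -/
theorem stmt18 (m : ℕ) (h : Matrix (Fin m) (Fin m) ℂ) (T : Module.End ℂ (V m)) :
    Lop m (adOp m h T) = adOp m h (Lop m T) ∧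
      Rop m (adOp m h T) = adOp m h (Rop m T) := by
  set D := Dop m h with hD
  set E : Fin m → Module.End ℂ (V m) := fun s => ∑ j, h s j • aAnn m j with hE
  set F : Fin m → Module.End ℂ (V m) := fun s => ∑ i, h i s • aDag m i with hF
  have cancelL : ∑ s, (E s * T * aDag m s - aAnn m s * T * F s) = 0 := by
    rw [Finset.sum_sub_distrib, sub_eq_zero]
    simp only [hE, hF, Finset.sum_mul, Finset.mul_sum, smul_mul_assoc, mul_smul_comm]
    exact Finset.sum_comm
  have cancelR : ∑ s, (aDag m s * T * E s - F s * T * aAnn m s) = 0 := by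
    rw [Finset.sum_sub_distrib, sub_eq_zero]
    simp only [hE, hF, Finset.sum_mul, Finset.mul_sum, smul_mul_assoc, mul_smul_comm]
    exact Finset.sum_comm
  constructor
  · have step : ∀ s : Fin m, aAnn m s * (D * T - T * D) * aDag m s
        = (D * (aAnn m s * T * aDag m s) - (aAnn m s * T * aDag m s) * D)
          + (E s * T * aDag m s - aAnn m s * T * F s) := by
      intro s
      have h1 : aAnn m s * D = D * aAnn m s + E s := ann_D m h s
      have h2 : D * aDag m s = aDag m s * D + F s := D_dag m h s
      calc aAnn m s * (D * T - T * D) * aDag m s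
          = (aAnn m s * D) * T * aDag m s - aAnn m s * T * (D * aDag m s) := by simp only [mul_sub, sub_mul, mul_assoc]
        _ = (D * aAnn m s + E s) * T * aDag m s
            - aAnn m s * T * (aDag m s * D + F s) := by rw [h1, h2]
        _ = _ := by simp only [add_mul, mul_add, sub_mul, mul_sub, mul_assoc]; abel
    simp only [Lop, adOp, ← Module.End.mul_eq_comp, ← hD]
    simp only [← mul_assoc]
    simp only [step]
    rw [Finset.sum_add_distrib, cancelL, add_zero, Finset.sum_sub_distrib,
      ← Finset.mul_sum, ← Finset.sum_mul]
  · have step : ∀ s : Fin m, aDag m s * (D * T - T * D) * aAnn m s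
        = (D * (aDag m s * T * aAnn m s) - (aDag m s * T * aAnn m s) * D)
          + (aDag m s * T * E s - F s * T * aAnn m s) := by
      intro s
      have h1 : aAnn m s * D = D * aAnn m s + E s := ann_D m h s
      have h2 : D * aDag m s = aDag m s * D + F s := D_dag m h s
      have h1' : D * aAnn m s = aAnn m s * D - E s := by rw [h1]; noncomm_ring
      have h2' : aDag m s * D = D * aDag m s - F s := by rw [h2]; noncomm_ring
      calc aDag m s * (D * T - T * D) * aAnn m s
          = (aDag m s * D) * T * aAnn m s - aDag m s * T * (D * aAnn m s) := by simp only [mul_sub, sub_mul, mul_assoc]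
        _ = (D * aDag m s - F s) * T * aAnn m s
            - aDag m s * T * (aAnn m s * D - E s) := by rw [h1', h2']
        _ = _ := by simp only [add_mul, mul_add, sub_mul, mul_sub, mul_assoc]; abel
    simp only [Rop, adOp, ← Module.End.mul_eq_comp, ← hD]
    simp only [← mul_assoc]
    simp only [step]
    rw [Finset.sum_add_distrib, cancelR, add_zero, Finset.sum_sub_distrib,
      ← Finset.mul_sum, ← Finset.sum_mul]
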